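/- Let X and Y be topological spaces and n a natural number. Then the n-th symmetric product of the disjoint union, SP^n(X ⊔ Y), is homeomorphic to the disjoint union, over all pairs (k,l) of natural numbers with k + l = n, of the product spaces SP^k(X) × SP^l(Y). -/

import Mathlib

noncomputable section

/-- The setoid on `Fin n → X` identifying two tuples when they differ by a
permutation of the coordinates. -/
def symmSetoid (n : ℕ) (X : Type*) : Setoid (Fin n → X) where
  r x y := ∃ γ : Equiv.Perm (Fin n), x ∘ γ = y
  iseqv := by
    constructor
    · intro x; exact ⟨1, rfl⟩
    · rintro x y ⟨γ, rfl⟩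
      exact ⟨γ⁻¹, by ext i; simp⟩
    · rintro x y z ⟨γ, rfl⟩ ⟨δ, rfl⟩
      exact ⟨γ * δ, by ext i; simp⟩

/-- The `n`-th symmetric product of a topological space: the quotient of `X^n`
by the full symmetric group, with the quotient topology. -/
def SymmProd (n : ℕ) (X : Type*) [TopologicalSpace X] : Type _ :=
  Quotient (symmSetoid n X)

instance (n : ℕ) (X : Type*) [TopologicalSpace X] : TopologicalSpace (SymmProd n X) :=
  instTopologicalSpaceQuotient

/-- The map induced on the `n`-th symmetric product by a map. -/
def SymmProd.map (n : ℕ) {X Y : Type*} [TopologicalSpace X] [TopologicalSpace Y]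
    (f : X → Y) : SymmProd n X → SymmProd n Y :=
  Quotient.map (fun x => f ∘ x) (by rintro x y ⟨γ, rfl⟩; exact ⟨γ, rfl⟩)

/-! ### Auxiliary material -/

namespace SymmProdSumAux

/-- The quotient map onto the symmetric product is an open map. -/
lemma isOpenMap_symmQuot (m : ℕ) (Z : Type*) [TopologicalSpace Z] :
    IsOpenMap (Quotient.mk (symmSetoid m Z)) := by
  intro U hU
  rw [isOpen_coinduced]
  show IsOpen (Quotient.mk (symmSetoid m Z) ⁻¹' (Quotient.mk (symmSetoid m Z) '' U))
  have : (Quotient.mk (symmSetoid m Z)) ⁻¹' ((Quotient.mk (symmSetoid m Z)) '' U)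
      = ⋃ γ : Equiv.Perm (Fin m), (fun x => x ∘ γ) ⁻¹' U := by
    ext x
    simp only [Set.mem_preimage, Set.mem_image, Set.mem_iUnion]
    constructor
    · rintro ⟨u, hu, huq⟩
      obtain ⟨γ, hγ⟩ := Quotient.exact huq
      refine ⟨γ⁻¹, ?_⟩
      have : x ∘ ⇑γ⁻¹ = u := by rw [← hγ]; ext i; simp
      exact (congrArg (· ∈ U) this).mpr hu
    · rintro ⟨γ, hγ⟩
      exact ⟨x ∘ γ, hγ, Quotient.sound ⟨γ⁻¹, by ext i; simp⟩⟩
  rw [this]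
  exact isOpen_iUnion fun γ =>
    (hU.preimage (by continuity : Continuous fun (x : Fin m → Z) => x ∘ γ))

section
set_option linter.unusedSectionVars false
variable {X Y : Type} [TopologicalSpace X] [TopologicalSpace Y] {n : ℕ}

/-- Identification of `Fin k ⊕ Fin l` with `Fin n` when `k + l = n`. -/
def eKL (k l n : ℕ) (h : k + l = n) : Fin k ⊕ Fin l ≃ Fin n :=
  finSumFinEquiv.trans (finCongr h)

/-- The standard tuple associated to a pair of tuples. -/
def Ftup (k l : ℕ) (h : k + l = n) (x : Fin k → X) (y : Fin l → Y) : Fin n → X ⊕ Y :=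
  Sum.elim (Sum.inl ∘ x) (Sum.inr ∘ y) ∘ (eKL k l n h).symm

lemma Ftup_compat (k l : ℕ) (h : k + l = n) (x x' : Fin k → X) (y y' : Fin l → Y)
    (γ : Equiv.Perm (Fin k)) (δ : Equiv.Perm (Fin l))
    (hx : x ∘ γ = x') (hy : y ∘ δ = y') :
    ∃ ρ : Equiv.Perm (Fin n), Ftup k l h x y ∘ ρ = Ftup k l h x' y' := by
  refine ⟨((eKL k l n h).symm.trans ((γ.sumCongr δ).trans (eKL k l n h))), ?_⟩
  ext i
  subst hx hy
  simp only [Function.comp_apply, Equiv.trans_apply, Ftup, Equiv.symm_apply_apply]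
  cases hs : (eKL k l n h).symm i with
  | inl a => simp [hs, Equiv.sumCongr_apply]
  | inr b => simp [hs, Equiv.sumCongr_apply]

lemma Ftup_key (k l k' l' : ℕ) (h : k + l = n) (h' : k' + l' = n)
    (x : Fin k → X) (y : Fin l → Y) (x' : Fin k' → X) (y' : Fin l' → Y)
    (ρ : Equiv.Perm (Fin n)) (heq : Ftup k l h x y ∘ ρ = Ftup k' l' h' x' y')
    (s : Fin k' ⊕ Fin l') :
    Sum.elim (Sum.inl ∘ x) (Sum.inr ∘ y)
      (((eKL k' l' n h').trans (ρ.trans (eKL k l n h).symm)) s)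
      = Sum.elim (Sum.inl ∘ x') (Sum.inr ∘ y') s := by
  have := congrFun heq (eKL k' l' n h' s)
  simpa [Ftup] using this

lemma Ftup_left (k l k' l' : ℕ) (h : k + l = n) (h' : k' + l' = n)
    (x : Fin k → X) (y : Fin l → Y) (x' : Fin k' → X) (y' : Fin l' → Y)
    (ρ : Equiv.Perm (Fin n)) (heq : Ftup k l h x y ∘ ρ = Ftup k' l' h' x' y')
    (j : Fin k') :
    ∃ a, ((eKL k' l' n h').trans (ρ.trans (eKL k l n h).symm)) (Sum.inl j) = Sum.inl a
      ∧ x a = x' j := by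
  have key := Ftup_key k l k' l' h h' x y x' y' ρ heq (Sum.inl j)
  cases hτ : ((eKL k' l' n h').trans (ρ.trans (eKL k l n h).symm)) (Sum.inl j) with
  | inl a => rw [hτ] at key; simp at key; exact ⟨a, rfl, key⟩
  | inr b => rw [hτ] at key; simp at key

lemma Ftup_right (k l k' l' : ℕ) (h : k + l = n) (h' : k' + l' = n)
    (x : Fin k → X) (y : Fin l → Y) (x' : Fin k' → X) (y' : Fin l' → Y)
    (ρ : Equiv.Perm (Fin n)) (heq : Ftup k l h x y ∘ ρ = Ftup k' l' h' x' y')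
    (j : Fin l') :
    ∃ b, ((eKL k' l' n h').trans (ρ.trans (eKL k l n h).symm)) (Sum.inr j) = Sum.inr b
      ∧ y b = y' j := by
  have key := Ftup_key k l k' l' h h' x y x' y' ρ heq (Sum.inr j)
  cases hτ : ((eKL k' l' n h').trans (ρ.trans (eKL k l n h).symm)) (Sum.inr j) with
  | inl a => rw [hτ] at key; simp at key
  | inr b => rw [hτ] at key; simp at key; exact ⟨b, rfl, key⟩

lemma Ftup_card (k l k' l' : ℕ) (h : k + l = n) (h' : k' + l' = n)
    (x : Fin k → X) (y : Fin l → Y) (x' : Fin k' → X) (y' : Fin l' → Y)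
    (ρ : Equiv.Perm (Fin n)) (heq : Ftup k l h x y ∘ ρ = Ftup k' l' h' x' y') :
    k = k' ∧ l = l' := by
  set τ := ((eKL k' l' n h').trans (ρ.trans (eKL k l n h).symm)) with hτdef
  have hL := Ftup_left k l k' l' h h' x y x' y' ρ heq
  have hR := Ftup_right k l k' l' h h' x y x' y' ρ heq
  choose fL hfL _ using hL
  choose fR hfR _ using hR
  have hfLinj : Function.Injective fL := by
    intro j1 j2 hj
    have : τ (Sum.inl j1) = τ (Sum.inl j2) := by rw [hfL, hfL, hj]
    simpa using τ.injective this
  have hfRinj : Function.Injective fR := by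
    intro j1 j2 hj
    have : τ (Sum.inr j1) = τ (Sum.inr j2) := by rw [hfR, hfR, hj]
    simpa using τ.injective this
  have h1 : k' ≤ k := by simpa using Fintype.card_le_of_injective fL hfLinj
  have h2 : l' ≤ l := by simpa using Fintype.card_le_of_injective fR hfRinj
  omega

lemma Ftup_fiber (k l : ℕ) (h h' : k + l = n)
    (x x' : Fin k → X) (y y' : Fin l → Y)
    (ρ : Equiv.Perm (Fin n)) (heq : Ftup k l h x y ∘ ρ = Ftup k l h' x' y') :
    (∃ γ : Equiv.Perm (Fin k), x ∘ γ = x') ∧ (∃ δ : Equiv.Perm (Fin l), y ∘ δ = y') := by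
  have hL := Ftup_left k l k l h h' x y x' y' ρ heq
  have hR := Ftup_right k l k l h h' x y x' y' ρ heq
  set τ := ((eKL k l n h').trans (ρ.trans (eKL k l n h).symm)) with hτdef
  choose fL hfL hxL using hL
  choose fR hfR hyR using hR
  have hfLinj : Function.Injective fL := by
    intro j1 j2 hj
    have : τ (Sum.inl j1) = τ (Sum.inl j2) := by rw [hfL, hfL, hj]
    simpa using τ.injective this
  have hfRinj : Function.Injective fR := by
    intro j1 j2 hj
    have : τ (Sum.inr j1) = τ (Sum.inr j2) := by rw [hfR, hfR, hj]
    simpa using τ.injective this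
  refine ⟨⟨Equiv.ofBijective fL ((Finite.injective_iff_bijective).mp hfLinj), ?_⟩,
    ⟨Equiv.ofBijective fR ((Finite.injective_iff_bijective).mp hfRinj), ?_⟩⟩
  · ext j; exact hxL j
  · ext j; exact hyR j

lemma Ftup_surj (z : Fin n → X ⊕ Y) :
    ∃ (k l : ℕ) (h : k + l = n) (x : Fin k → X) (y : Fin l → Y)
      (ρ : Equiv.Perm (Fin n)), Ftup k l h x y ∘ ρ = z := by
  classical
  set p : Fin n → Prop := fun i => (z i).isLeft = true with hp
  set k := Fintype.card {i // p i} with hk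
  set l := Fintype.card {i // ¬ p i} with hl
  have h : k + l = n := by
    rw [hk, hl, ← Fintype.card_sum]
    rw [Fintype.card_congr (Equiv.sumCompl p)]
    simp
  set eX : {i // p i} ≃ Fin k := Fintype.equivFin _ with heX
  set eY : {i // ¬ p i} ≃ Fin l := Fintype.equivFin _ with heY
  set x : Fin k → X := fun j => (z (eX.symm j).1).getLeft (eX.symm j).2 with hx
  set y : Fin l → Y := fun j => (z (eY.symm j).1).getRight
    (Sum.not_isLeft.mp (eY.symm j).2) with hy
  set d : Fin n ≃ Fin k ⊕ Fin l := (Equiv.sumCompl p).symm.trans (eX.sumCongr eY) with hd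
  have claim : ∀ i, Sum.elim (Sum.inl ∘ x) (Sum.inr ∘ y) (d i) = z i := by
    intro i
    by_cases hpi : p i
    · have : d i = Sum.inl (eX ⟨i, hpi⟩) := by
        simp [hd, Equiv.sumCompl_symm_apply_of_pos hpi]
      rw [this]
      simp only [Sum.elim_inl, Function.comp_apply, hx]
      rw [show (eX.symm (eX ⟨i, hpi⟩)) = ⟨i, hpi⟩ from eX.symm_apply_apply _]
      exact Sum.inl_getLeft _ _
    · have : d i = Sum.inr (eY ⟨i, hpi⟩) := by
        simp [hd, Equiv.sumCompl_symm_apply_of_neg hpi]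
      rw [this]
      simp only [Sum.elim_inr, Function.comp_apply, hy]
      rw [show (eY.symm (eY ⟨i, hpi⟩)) = ⟨i, hpi⟩ from eY.symm_apply_apply _]
      exact Sum.inr_getRight _ _
  refine ⟨k, l, h, x, y, d.trans (eKL k l n h), ?_⟩
  ext i
  simp only [Function.comp_apply, Equiv.trans_apply, Ftup, Equiv.symm_apply_apply]
  exact claim i

/-! ### Topological part -/

/-- Precomposition with an equivalence of (discrete) index types, as a
homeomorphism of function spaces with the product topology. -/
def precompHomeo {ι ι' : Type*} (W : Type*) [TopologicalSpace W] (e : ι ≃ ι') :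
    (ι → W) ≃ₜ (ι' → W) where
  toEquiv := Equiv.arrowCongr e (Equiv.refl W)
  continuous_toFun := continuous_pi fun j => continuous_apply _
  continuous_invFun := continuous_pi fun i => continuous_apply _

/-- The target sigma type. -/
abbrev SPsum (X Y : Type) [TopologicalSpace X] [TopologicalSpace Y] (n : ℕ) :=
  Σ kl : {p : ℕ × ℕ // p.1 + p.2 = n}, SymmProd kl.1.1 X × SymmProd kl.1.2 Y

/-- The pre-quotient sigma type. -/
abbrev SPsumPre (X Y : Type) [TopologicalSpace X] [TopologicalSpace Y] (n : ℕ) :=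
  Σ kl : {p : ℕ × ℕ // p.1 + p.2 = n}, (Fin kl.1.1 → X) × (Fin kl.1.2 → Y)

/-- The standard tuple map on a single component, as a map of pairs. -/
def Fm (k l : ℕ) (h : k + l = n) : (Fin k → X) × (Fin l → Y) → (Fin n → X ⊕ Y) :=
  fun p => Ftup k l h p.1 p.2

lemma Fm_eq (k l : ℕ) (h : k + l = n) :
    Fm (X := X) (Y := Y) k l h = (precompHomeo (X ⊕ Y) (eKL k l n h)) ∘
      (Homeomorph.sumArrowHomeomorphProdArrow.symm) ∘
      (Prod.map (fun x : Fin k → X => Sum.inl ∘ x) (fun y : Fin l → Y => Sum.inr ∘ y)) := by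
  ext p i
  simp only [Fm, Ftup, Function.comp_apply, precompHomeo, Homeomorph.homeomorph_mk_coe,
    Equiv.arrowCongr_apply, Equiv.coe_refl, Prod.map_apply]
  cases hs : (eKL k l n h).symm i with
  | inl a => simp [hs, Homeomorph.sumArrowHomeomorphProdArrow, Equiv.sumArrowEquivProdArrow]
  | inr b => simp [hs, Homeomorph.sumArrowHomeomorphProdArrow, Equiv.sumArrowEquivProdArrow]

lemma isOpenMap_postcomp_inl (k : ℕ) :
    IsOpenMap (fun x : Fin k → X => (Sum.inl ∘ x : Fin k → X ⊕ Y)) := by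
  have : (fun x : Fin k → X => (Sum.inl ∘ x : Fin k → X ⊕ Y))
      = Pi.map (fun _ : Fin k => (Sum.inl : X → X ⊕ Y)) := rfl
  rw [this]
  exact IsOpenMap.piMap (fun _ => Topology.IsOpenEmbedding.inl.isOpenMap)
    (by simp [Filter.cofinite_eq_bot])

lemma isOpenMap_postcomp_inr (l : ℕ) :
    IsOpenMap (fun y : Fin l → Y => (Sum.inr ∘ y : Fin l → X ⊕ Y)) := by
  have : (fun y : Fin l → Y => (Sum.inr ∘ y : Fin l → X ⊕ Y))
      = Pi.map (fun _ : Fin l => (Sum.inr : Y → X ⊕ Y)) := rfl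
  rw [this]
  exact IsOpenMap.piMap (fun _ => Topology.IsOpenEmbedding.inr.isOpenMap)
    (by simp [Filter.cofinite_eq_bot])

lemma isOpenMap_Fm (k l : ℕ) (h : k + l = n) :
    IsOpenMap (Fm (X := X) (Y := Y) k l h) := by
  rw [Fm_eq]
  exact ((precompHomeo (X ⊕ Y) (eKL k l n h)).isOpenMap.comp
    Homeomorph.sumArrowHomeomorphProdArrow.symm.isOpenMap).comp
    ((isOpenMap_postcomp_inl k).prodMap (isOpenMap_postcomp_inr l))

lemma continuous_Fm (k l : ℕ) (h : k + l = n) :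
    Continuous (Fm (X := X) (Y := Y) k l h) := by
  rw [Fm_eq]
  refine ((precompHomeo (X ⊕ Y) (eKL k l n h)).continuous.comp
    Homeomorph.sumArrowHomeomorphProdArrow.symm.continuous).comp
    (Continuous.prodMap ?_ ?_)
  · exact continuous_pi fun i => continuous_inl.comp (continuous_apply i)
  · exact continuous_pi fun i => continuous_inr.comp (continuous_apply i)

end

end SymmProdSumAux

open SymmProdSumAux in
/-- The `n`-th symmetric product of a disjoint union `X ⊔ Y` is homeomorphic to
the disjoint union over `k + l = n` of the products `SP^k(X) × SP^l(Y)`. -/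
theorem symmProd_sum_homeomorph (X Y : Type) [TopologicalSpace X] [TopologicalSpace Y]
    (n : ℕ) :
    Nonempty (SymmProd n (X ⊕ Y) ≃ₜ
      Σ kl : {p : ℕ × ℕ // p.1 + p.2 = n}, SymmProd kl.1.1 X × SymmProd kl.1.2 Y) := by
  classical
  -- the big pre-quotient map
  set Fbig : SPsumPre X Y n → (Fin n → X ⊕ Y) :=
    fun s => Ftup s.1.1.1 s.1.1.2 s.1.2 s.2.1 s.2.2 with hFbig
  -- the quotient map of sigma types
  set Qbig : SPsumPre X Y n → SPsum X Y n :=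
    fun s => ⟨s.1, (Quotient.mk _ s.2.1, Quotient.mk _ s.2.2)⟩ with hQbig
  -- the map Ψ
  set Ψ : SPsum X Y n → SymmProd n (X ⊕ Y) := fun t =>
    Quotient.liftOn₂ t.2.1 t.2.2
      (fun x y => Quotient.mk _ (Ftup t.1.1.1 t.1.1.2 t.1.2 x y))
      (by
        rintro x y x' y' ⟨γ, hγ⟩ ⟨δ, hδ⟩
        obtain ⟨ρ, hρ⟩ := Ftup_compat t.1.1.1 t.1.1.2 t.1.2 x x' y y' γ δ hγ hδ
        exact Quotient.sound ⟨ρ, hρ⟩) with hΨ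
  have hcomm : Ψ ∘ Qbig = Quotient.mk _ ∘ Fbig := rfl
  -- Qbig is an open quotient map
  have hQcont : Continuous Qbig := by
    refine continuous_sigma fun kl => ?_
    refine continuous_sigmaMk.comp (Continuous.prodMk
      (f := fun a : (Fin kl.1.1 → X) × (Fin kl.1.2 → Y) => (Quotient.mk _ a.1 : SymmProd kl.1.1 X))
      (g := fun a : (Fin kl.1.1 → X) × (Fin kl.1.2 → Y) => (Quotient.mk _ a.2 : SymmProd kl.1.2 Y)) ?_ ?_)
    · exact Continuous.comp (continuous_quot_mk (r := ⇑(symmSetoid kl.1.1 X))) continuous_fst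
    · exact Continuous.comp (continuous_quot_mk (r := ⇑(symmSetoid kl.1.2 Y))) continuous_snd
  have hQopen : IsOpenMap Qbig := by
    refine isOpenMap_sigma.mpr fun kl => ?_
    exact isOpenMap_sigmaMk.comp
      ((isOpenMap_symmQuot kl.1.1 X).prodMap (isOpenMap_symmQuot kl.1.2 Y))
  have hQsurj : Function.Surjective Qbig := by
    rintro ⟨kl, qx, qy⟩
    obtain ⟨x, rfl⟩ := Quotient.exists_rep qx
    obtain ⟨y, rfl⟩ := Quotient.exists_rep qy
    exact ⟨⟨kl, (x, y)⟩, rfl⟩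
  have hQquot : Topology.IsQuotientMap Qbig := hQopen.isQuotientMap hQcont hQsurj
  -- Fbig is continuous and open
  have hFcont : Continuous Fbig := by
    refine continuous_sigma fun kl => ?_
    exact continuous_Fm kl.1.1 kl.1.2 kl.2
  have hFopen : IsOpenMap Fbig := by
    refine isOpenMap_sigma.mpr fun kl => ?_
    exact isOpenMap_Fm kl.1.1 kl.1.2 kl.2
  -- Ψ is continuous
  have hΨcont : Continuous Ψ := by
    rw [hQquot.continuous_iff, hcomm]
    exact continuous_quot_mk.comp hFcont
  -- Ψ is open
  have hΨopen : IsOpenMap Ψ := by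
    intro W hW
    have himg : Ψ '' W = Quotient.mk _ '' (Fbig '' (Qbig ⁻¹' W)) := by
      conv_lhs => rw [← Set.image_preimage_eq W hQsurj]
      rw [← Set.image_comp, hcomm]
      exact Set.image_comp _ _ _
    rw [himg]
    exact isOpenMap_symmQuot n (X ⊕ Y) _ (hFopen _ (hW.preimage hQcont))
  -- Ψ is bijective
  have hΨsurj : Function.Surjective Ψ := by
    intro q
    obtain ⟨z, rfl⟩ := Quotient.exists_rep q
    obtain ⟨k, l, h, x, y, ρ, hρ⟩ := Ftup_surj z
    exact ⟨⟨⟨(k, l), h⟩, (Quotient.mk _ x, Quotient.mk _ y)⟩, Quotient.sound ⟨ρ, hρ⟩⟩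
  have hΨinj : Function.Injective Ψ := by
    rintro ⟨⟨⟨k, l⟩, h⟩, qx, qy⟩ ⟨⟨⟨k', l'⟩, h'⟩, qx', qy'⟩ heq
    obtain ⟨x, rfl⟩ := Quotient.exists_rep qx
    obtain ⟨y, rfl⟩ := Quotient.exists_rep qy
    obtain ⟨x', rfl⟩ := Quotient.exists_rep qx'
    obtain ⟨y', rfl⟩ := Quotient.exists_rep qy'
    obtain ⟨ρ, hρ⟩ := Quotient.exact heq
    obtain ⟨rfl, rfl⟩ := Ftup_card k l k' l' h h' x y x' y' ρ hρ
    obtain ⟨⟨γ, hγ⟩, ⟨δ, hδ⟩⟩ := Ftup_fiber k l h h' x x' y y' ρ hρ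
    have hxx : (Quotient.mk (symmSetoid k X) x) = Quotient.mk _ x' :=
      Quotient.sound ⟨γ, hγ⟩
    have hyy : (Quotient.mk (symmSetoid l Y) y) = Quotient.mk _ y' :=
      Quotient.sound ⟨δ, hδ⟩
    rw [hxx, hyy]
  exact ⟨(Equiv.toHomeomorphOfContinuousOpen
    (Equiv.ofBijective Ψ ⟨hΨinj, hΨsurj⟩) hΨcont hΨopen).symm⟩

end
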